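/- Let f : ℝ^d → ℝ be convex differentiable with α-Hölder gradient of constant H, let μ be a Borel probability measure on ℝ^d with finite second moment, and let r ∈ (0, 2/(α+1)]. Then for any points x_1, ..., x_n ∈ ℝ^d, the L^r(μ)-norm of x ↦ f(x) − max_i [f(x_i) + ⟨∇f(x_i), x − x_i⟩] is bounded by H · ‖min_i |x − x_i|‖_{L²(μ)}^{α+1}. -/

import Mathlib

open scoped RealInnerProductSpace
open MeasureTheory

section Aux
open AffineMap

lemma subgrad_aux {d : ℕ} {f : EuclideanSpace ℝ (Fin d) → ℝ}
    {g : EuclideanSpace ℝ (Fin d) → EuclideanSpace ℝ (Fin d)}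
    (hf : ConvexOn ℝ Set.univ f) (hg : ∀ x, HasGradientAt f (g x) x)
    (y x : EuclideanSpace ℝ (Fin d)) :
    f y + ⟪g y, x - y⟫ ≤ f x := by
  set φ : ℝ → ℝ := f ∘ (AffineMap.lineMap y x : ℝ →ᵃ[ℝ] EuclideanSpace ℝ (Fin d)) with hφ
  have hφc : ConvexOn ℝ Set.univ φ := by
    have h := hf.comp_affineMap (AffineMap.lineMap y x : ℝ →ᵃ[ℝ] EuclideanSpace ℝ (Fin d))
    simpa using h
  have hline : HasDerivAt (fun t : ℝ => (AffineMap.lineMap y x : ℝ →ᵃ[ℝ] EuclideanSpace ℝ (Fin d)) t) (x - y) 0 :=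
    hasDerivAt_lineMap
  have hFd : HasFDerivAt f (InnerProductSpace.toDual ℝ _ (g y)) ((AffineMap.lineMap y x : ℝ →ᵃ[ℝ] EuclideanSpace ℝ (Fin d)) (0:ℝ)) := by
    rw [AffineMap.lineMap_apply_zero]
    exact (hg y).hasFDerivAt
  have hder : HasDerivAt φ ⟪g y, x - y⟫ 0 := by
    have := hFd.comp_hasDerivAt (0:ℝ) hline
    simpa [hφ, InnerProductSpace.toDual_apply_apply] using this
  have hs := hφc.le_slope_of_hasDerivAt (Set.mem_univ (0:ℝ)) (Set.mem_univ (1:ℝ)) zero_lt_one hder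
  rw [slope_def_field] at hs
  have h0 : φ 0 = f y := by simp [hφ]
  have h1 : φ 1 = f x := by simp [hφ]
  rw [h0, h1] at hs
  simp only [sub_zero, div_one] at hs
  linarith

end Aux

lemma aux_int {X : Type*} [MeasurableSpace X] [TopologicalSpace X] [OpensMeasurableSpace X]
    (μ : Measure X) [IsProbabilityMeasure μ]
    (err m : X → ℝ) (H α r : ℝ) (hH : 0 ≤ H) (hα : 0 < α) (hr : 0 < r)
    (hs2 : r * (α + 1) ≤ 2)
    (hm_c : Continuous m) (hm0 : ∀ x, 0 ≤ m x)
    (hm2 : Integrable (fun x => m x ^ 2) μ)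
    (h0 : ∀ x, 0 ≤ err x) (hle : ∀ x, err x ≤ H * m x ^ (α + 1)) :
    (∫ x, |err x| ^ r ∂μ) ^ (1 / r) ≤ H * ((∫ x, m x ^ 2 ∂μ) ^ ((1:ℝ) / 2)) ^ (α + 1) := by
  set s : ℝ := r * (α + 1) with hs
  have hα1 : (0:ℝ) < α + 1 := by linarith
  have hs_pos : 0 < s := mul_pos hr hα1
  have hms_c : Continuous (fun x => m x ^ s) := hm_c.rpow_const fun x => Or.inr hs_pos.le
  have hms_int : Integrable (fun x => m x ^ s) μ := by
    refine ((integrable_const (1:ℝ)).add hm2).mono' hms_c.aestronglyMeasurable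
      (ae_of_all _ fun x => ?_)
    rw [Real.norm_of_nonneg (Real.rpow_nonneg (hm0 x) _)]
    simp only [Pi.add_apply]
    rcases le_or_gt (m x) 1 with h | h
    · have h1 := Real.rpow_le_one (hm0 x) h hs_pos.le
      nlinarith [sq_nonneg (m x)]
    · have h2 : m x ^ s ≤ m x ^ (2:ℝ) := Real.rpow_le_rpow_of_exponent_le h.le hs2
      rw [show (2:ℝ) = ((2:ℕ):ℝ) by norm_num, Real.rpow_natCast] at h2
      linarith
  have hP : ∀ x, |err x| ^ r ≤ H ^ r * m x ^ s := by
    intro x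
    rw [abs_of_nonneg (h0 x)]
    calc err x ^ r ≤ (H * m x ^ (α+1)) ^ r :=
          Real.rpow_le_rpow (h0 x) (hle x) hr.le
      _ = H ^ r * m x ^ s := by
          rw [Real.mul_rpow hH (Real.rpow_nonneg (hm0 x) _), ← Real.rpow_mul (hm0 x),
            mul_comm (α+1) r]
  have hint1 : (∫ x, |err x| ^ r ∂μ) ≤ H ^ r * ∫ x, m x ^ s ∂μ := by
    rw [← integral_const_mul]
    exact integral_mono_of_nonneg (ae_of_all _ fun x => by positivity)
      (hms_int.const_mul _) (ae_of_all _ hP)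
  have hI2 : (0:ℝ) ≤ ∫ x, m x ^ 2 ∂μ := integral_nonneg fun x => sq_nonneg _
  have hK : (∫ x, m x ^ s ∂μ) ≤ (∫ x, m x ^ 2 ∂μ) ^ (s / 2) := by
    rcases eq_or_lt_of_le hs2 with h | h
    · rw [h, div_self (two_ne_zero), Real.rpow_one]
      refine le_of_eq (integral_congr_ae (ae_of_all _ fun x => ?_))
      show m x ^ (2:ℝ) = m x ^ (2:ℕ)
      rw [show (2:ℝ) = ((2:ℕ):ℝ) by norm_num, Real.rpow_natCast]
    · have hp1 : 1 < 2 / s := (one_lt_div hs_pos).mpr h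
      have hpq := Real.HolderConjugate.conjExponent hp1
      have hmem1 : MemLp (fun x => m x ^ s) (ENNReal.ofReal (2/s)) μ := by
        constructor
        · exact hms_c.aestronglyMeasurable
        · have heq : (fun x => m x ^ s) = fun x => ‖m x‖ ^ s :=
            funext fun x => by rw [Real.norm_of_nonneg (hm0 x)]
          rw [heq, eLpNorm_norm_rpow _ hs_pos]
          refine ENNReal.rpow_lt_top_of_nonneg hs_pos.le ?_
          have h2 : ENNReal.ofReal (2/s) * ENNReal.ofReal s = 2 := by
            rw [← ENNReal.ofReal_mul (by positivity), div_mul_cancel₀ _ hs_pos.ne']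
            norm_num
          rw [h2]
          exact ((memLp_two_iff_integrable_sq hm_c.aestronglyMeasurable).mpr hm2).eLpNorm_ne_top
      have hmem2 : MemLp (fun _ : X => (1:ℝ)) (ENNReal.ofReal (Real.conjExponent (2/s))) μ :=
        memLp_const 1
      have h := integral_mul_le_Lp_mul_Lq_of_nonneg hpq
        (ae_of_all _ fun x => Real.rpow_nonneg (hm0 x) s)
        (ae_of_all _ fun _ => zero_le_one) hmem1 hmem2
      simp only [mul_one, Real.one_rpow, integral_const, measure_univ, ENNReal.toReal_one, probReal_univ,
        smul_eq_mul, one_mul] at h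
      have hconv : (∫ x, (m x ^ s) ^ (2/s) ∂μ) = ∫ x, m x ^ 2 ∂μ := by
        refine integral_congr_ae (ae_of_all _ fun x => ?_)
        show (m x ^ s) ^ (2/s) = m x ^ 2
        rw [← Real.rpow_mul (hm0 x), mul_div_cancel₀ _ hs_pos.ne',
          show (2:ℝ) = ((2:ℕ):ℝ) by norm_num, Real.rpow_natCast]
      rw [hconv, one_div_div] at h
      exact h
  calc (∫ x, |err x| ^ r ∂μ) ^ (1/r)
      ≤ (H ^ r * (∫ x, m x ^ 2 ∂μ) ^ (s/2)) ^ (1/r) := by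
        refine Real.rpow_le_rpow (integral_nonneg fun x => by positivity)
          (hint1.trans (mul_le_mul_of_nonneg_left hK (Real.rpow_nonneg hH r))) (by positivity)
    _ = H * ((∫ x, m x ^ 2 ∂μ) ^ ((1:ℝ)/2)) ^ (α+1) := by
        rw [Real.mul_rpow (Real.rpow_nonneg hH r) (Real.rpow_nonneg hI2 _),
          ← Real.rpow_mul hH, mul_one_div, div_self hr.ne', Real.rpow_one,
          ← Real.rpow_mul hI2, ← Real.rpow_mul hI2]
        have hexp : s / 2 * (1/r) = 1/2 * (α+1) := by
          rw [hs]; field_simp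
        rw [hexp]

theorem Lr_error_le_quantization (d n : ℕ) (hn : 0 < n)
    (f : EuclideanSpace ℝ (Fin d) → ℝ) (g : EuclideanSpace ℝ (Fin d) → EuclideanSpace ℝ (Fin d))
    (hf : ConvexOn ℝ Set.univ f) (hg : ∀ x, HasGradientAt f (g x) x)
    (α H : ℝ) (hα : 0 < α)
    (hHolder : ∀ x y, ‖g x - g y‖ ≤ H * ‖x - y‖ ^ α)
    (μ : Measure (EuclideanSpace ℝ (Fin d))) [IsProbabilityMeasure μ]
    (hμ : Integrable (fun x => ‖x‖ ^ 2) μ)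
    (r : ℝ) (hr : 0 < r) (hr2 : r ≤ 2 / (α + 1))
    (p : Fin n → EuclideanSpace ℝ (Fin d)) :
    (∫ x, |f x - Finset.univ.sup' (Finset.univ_nonempty_iff.mpr ⟨⟨0, hn⟩⟩)
        (fun i => f (p i) + ⟪g (p i), x - p i⟫)| ^ r ∂μ) ^ (1 / r)
      ≤ H * ((∫ x, (Finset.univ.inf' (Finset.univ_nonempty_iff.mpr ⟨⟨0, hn⟩⟩)
        (fun i => ‖x - p i‖)) ^ 2 ∂μ) ^ ((1 : ℝ) / 2)) ^ (α + 1) := by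
  have hα1 : (0:ℝ) < α + 1 := by linarith
  have hne : (Finset.univ : Finset (Fin n)).Nonempty := Finset.univ_nonempty_iff.mpr ⟨⟨0, hn⟩⟩
  by_cases hd : d = 0
  · -- trivial case: the space is a point
    subst hd
    have hnorm0 : ∀ x y : EuclideanSpace ℝ (Fin 0), ‖x - y‖ = 0 := by
      intro x y; simp [EuclideanSpace.norm_eq]
    have heq : ∀ x y : EuclideanSpace ℝ (Fin 0), x = y := fun x y =>
      sub_eq_zero.mp (norm_eq_zero.mp (hnorm0 x y))
    have h1 : ∀ x : EuclideanSpace ℝ (Fin 0),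
        (Finset.univ.inf' (Finset.univ_nonempty_iff.mpr ⟨⟨0, hn⟩⟩)
          (fun i => ‖x - p i‖)) = 0 := by
      intro x
      rw [show (fun i : Fin n => ‖x - p i‖) = fun _ => (0:ℝ) from
        funext fun i => hnorm0 _ _]
      exact Finset.inf'_const _ _
    have h2 : ∀ x : EuclideanSpace ℝ (Fin 0),
        (Finset.univ.sup' (Finset.univ_nonempty_iff.mpr ⟨⟨0, hn⟩⟩)
          (fun i => f (p i) + ⟪g (p i), x - p i⟫)) = f x := by
      intro x
      rw [show (fun i : Fin n => f (p i) + ⟪g (p i), x - p i⟫) = fun _ => f x from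
        funext fun i => by rw [heq (p i) x, sub_self, inner_zero_right, add_zero]]
      exact Finset.sup'_const _ _
    simp only [h1, h2, sub_self, abs_zero]
    rw [Real.zero_rpow hr.ne']
    simp only [integral_zero]
    rw [Real.zero_rpow (by positivity : (1:ℝ)/r ≠ 0)]
    have : ((0:ℝ)^(2:ℕ)) = 0 := by norm_num
    simp only [this]  -- integrand 0^2
    rw [integral_zero, Real.zero_rpow (by norm_num : (1:ℝ)/2 ≠ 0),
      Real.zero_rpow hα1.ne', mul_zero]
  · -- main case
    have hd' : 0 < d := Nat.pos_of_ne_zero hd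
    have hH : 0 ≤ H := by
      have h := hHolder (EuclideanSpace.single ⟨0, hd'⟩ (1:ℝ)) 0
      rw [sub_zero, EuclideanSpace.norm_single, norm_one, Real.one_rpow, mul_one] at h
      exact le_trans (norm_nonneg _) h
    set m : EuclideanSpace ℝ (Fin d) → ℝ :=
      fun x => Finset.univ.inf' hne fun i => ‖x - p i‖ with hm
    have hm0 : ∀ x, 0 ≤ m x := fun x =>
      Finset.le_inf' hne _ fun i _ => norm_nonneg _
    have hm_c : Continuous m :=
      Continuous.finset_inf'_apply hne fun i _ => (continuous_id.sub continuous_const).norm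
    have hm2 : Integrable (fun x => m x ^ 2) μ := by
      have hint : Integrable (fun x : EuclideanSpace ℝ (Fin d) =>
          2*‖x‖^2 + 2*‖p ⟨0,hn⟩‖^2) μ := (hμ.const_mul 2).add (integrable_const _)
      refine hint.mono' ((hm_c.pow 2).aestronglyMeasurable) (ae_of_all _ fun x => ?_)
      rw [Real.norm_of_nonneg (by positivity)]
      have h1 : m x ≤ ‖x - p ⟨0,hn⟩‖ := Finset.inf'_le _ (Finset.mem_univ _)
      have h2 : ‖x - p ⟨0,hn⟩‖ ≤ ‖x‖ + ‖p ⟨0,hn⟩‖ := norm_sub_le _ _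
      have h3 : m x ≤ ‖x‖ + ‖p ⟨0,hn⟩‖ := h1.trans h2
      nlinarith [sq_nonneg (‖x‖ - ‖p ⟨0,hn⟩‖), hm0 x, h3, norm_nonneg x,
        norm_nonneg (p ⟨0,hn⟩)]
    have hsub : ∀ y x, f y + ⟪g y, x - y⟫ ≤ f x := subgrad_aux hf hg
    have h0 : ∀ x, 0 ≤ f x - Finset.univ.sup' hne (fun i => f (p i) + ⟪g (p i), x - p i⟫) :=
      fun x => sub_nonneg.mpr (Finset.sup'_le hne _ fun i _ => hsub (p i) x)
    have hle : ∀ x, f x - Finset.univ.sup' hne (fun i => f (p i) + ⟪g (p i), x - p i⟫)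
        ≤ H * m x ^ (α + 1) := by
      intro x
      obtain ⟨i₀, -, hi₀⟩ := Finset.exists_mem_eq_inf' hne fun i => ‖x - p i‖
      have hstep1 : f x - Finset.univ.sup' hne (fun i => f (p i) + ⟪g (p i), x - p i⟫)
          ≤ f x - (f (p i₀) + ⟪g (p i₀), x - p i₀⟫) :=
        sub_le_sub_left (Finset.le_sup' _ (Finset.mem_univ i₀)) _
      have h3 := hsub x (p i₀)
      rw [show p i₀ - x = -(x - p i₀) by abel, inner_neg_right] at h3
      have hstep2 : f x - (f (p i₀) + ⟪g (p i₀), x - p i₀⟫)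
          ≤ ⟪g x - g (p i₀), x - p i₀⟫ := by
        rw [inner_sub_left]; linarith
      have hstep3 : ⟪g x - g (p i₀), x - p i₀⟫ ≤ H * ‖x - p i₀‖ ^ (α + 1) := by
        calc ⟪g x - g (p i₀), x - p i₀⟫ ≤ ‖g x - g (p i₀)‖ * ‖x - p i₀‖ :=
              real_inner_le_norm _ _
          _ ≤ (H * ‖x - p i₀‖ ^ α) * ‖x - p i₀‖ :=
              mul_le_mul_of_nonneg_right (hHolder _ _) (norm_nonneg _)
          _ = H * ‖x - p i₀‖ ^ (α + 1) := by
              rw [mul_assoc]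
              congr 1
              rw [Real.rpow_add' (norm_nonneg _) hα1.ne', Real.rpow_one]
      have : m x = ‖x - p i₀‖ := hi₀
      rw [this]
      linarith
    exact aux_int μ _ m H α r hH hα hr
      (by
        have := mul_le_mul_of_nonneg_right hr2 hα1.le
        rwa [div_mul_cancel₀ _ hα1.ne'] at this)
      hm_c hm0 hm2 h0 hle
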